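/- For any μ > 0 and x > 0, I(μ, μ+2x) ≤ 4·I(μ, μ+x), where I(μ,d) = μ - d·log(eμ/d). -/

import Mathlib

/-- Rate function `I(μ,d) = μ - d + d·log(d/μ)`. -/
noncomputable def rateI (μ d : ℝ) : ℝ := μ - d + d * Real.log (d / μ)

private lemma gderiv (μ : ℝ) (hμ : 0 < μ) {t : ℝ} (ht : 0 ≤ t) :
    HasDerivAt (fun t : ℝ => -2*t + 4*((μ+t)*(Real.log (μ+t) - Real.log μ))
      - (μ+2*t)*(Real.log (μ+2*t) - Real.log μ))
      (4*Real.log (μ+t) - 2*Real.log (μ+2*t) - 2*Real.log μ) t := by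
  have h1 : (0:ℝ) < μ + t := by linarith
  have h2 : (0:ℝ) < μ + 2*t := by linarith
  have d1 : HasDerivAt (fun t : ℝ => μ + t) 1 t := by
    simpa using (hasDerivAt_id t).const_add μ
  have d2 : HasDerivAt (fun t : ℝ => μ + 2*t) 2 t := by
    simpa using ((hasDerivAt_id t).const_mul (2:ℝ)).const_add μ
  have l1 : HasDerivAt (fun t : ℝ => Real.log (μ + t)) (1/(μ+t)) t := by
    simpa using d1.log h1.ne'
  have l2 : HasDerivAt (fun t : ℝ => Real.log (μ + 2*t)) (2/(μ+2*t)) t := by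
    simpa using d2.log h2.ne'
  have p1 : HasDerivAt (fun t : ℝ => (μ+t)*(Real.log (μ+t) - Real.log μ))
      (1*(Real.log (μ+t) - Real.log μ) + (μ+t)*(1/(μ+t))) t :=
    d1.mul (l1.sub_const _)
  have p2 : HasDerivAt (fun t : ℝ => (μ+2*t)*(Real.log (μ+2*t) - Real.log μ))
      (2*(Real.log (μ+2*t) - Real.log μ) + (μ+2*t)*(2/(μ+2*t))) t :=
    d2.mul (l2.sub_const _)
  have dm : HasDerivAt (fun t : ℝ => -2*t) (-2) t := by
    simpa using (hasDerivAt_id t).const_mul (-2:ℝ)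
  have := (dm.add (p1.const_mul 4)).sub p2
  convert this using 1
  · rfl
  · rfl
  · rfl
  rw [mul_one_div_cancel h1.ne', mul_div_assoc', mul_div_cancel_left₀ _ h2.ne']
  ring

theorem rateI_two_x_le (μ x : ℝ) (hμ : 0 < μ) (hx : 0 < x) :
    rateI μ (μ + 2 * x) ≤ 4 * rateI μ (μ + x) := by
  set g : ℝ → ℝ := fun t => -2*t + 4*((μ+t)*(Real.log (μ+t) - Real.log μ))
      - (μ+2*t)*(Real.log (μ+2*t) - Real.log μ) with hg
  have hmono : MonotoneOn g (Set.Ici (0:ℝ)) := by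
    apply monotoneOn_of_deriv_nonneg (convex_Ici 0)
    · intro t ht
      exact (gderiv μ hμ ht).continuousAt.continuousWithinAt
    · intro t ht
      rw [interior_Ici] at ht
      exact (gderiv μ hμ (le_of_lt ht)).differentiableAt.differentiableWithinAt
    · intro t ht
      rw [interior_Ici] at ht
      rw [(gderiv μ hμ (le_of_lt ht)).deriv]
      have h1 : (0:ℝ) < μ + t := by linarith [Set.mem_Ioi.mp ht]
      have h2 : (0:ℝ) < μ + 2*t := by linarith [Set.mem_Ioi.mp ht]
      have key : Real.log (μ*(μ+2*t)) ≤ Real.log ((μ+t)*(μ+t)) := by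
        apply Real.log_le_log (by positivity)
        nlinarith [sq_nonneg t]
      rw [Real.log_mul hμ.ne' h2.ne', Real.log_mul h1.ne' h1.ne'] at key
      linarith
  have h0 : g 0 = 0 := by simp [hg]
  have hgx : 0 ≤ g x := by
    have := hmono (Set.self_mem_Ici) (Set.mem_Ici.mpr hx.le) hx.le
    rw [h0] at this; exact this
  have e1 : Real.log ((μ + x) / μ) = Real.log (μ+x) - Real.log μ :=
    Real.log_div (by linarith) hμ.ne'
  have e2 : Real.log ((μ + 2*x) / μ) = Real.log (μ+2*x) - Real.log μ :=
    Real.log_div (by linarith) hμ.ne'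
  simp only [rateI, e1, e2]
  simp only [hg] at hgx
  linarith
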